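/- arXiv:math/0006117 — 3 statements merged into one kernel-verified Lean document; each statement's English description precedes it below -/
import Mathlib

section
/- Let L be a Lie algebra with dim H²(L;L) < ∞ and fix a linear section μ : H²(L;L) → C²(L;L) choosing a representative cocycle for each class. Define on L ⊕ Hom(H²(L;L), L) the bracket [(l₁,φ₁),(l₂,φ₂)] = ([l₁,l₂], ψ) where ψ(α) = μ(α)(l₁,l₂) + [φ₁(α), l₂] + [l₁, φ₂(α)]. Then this bracket satisfies the Jacobi identity, i.e., defines a Lie algebra structure. -/
/-- Jacobi identity in the "left-bracketed cyclic" form. -/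
lemma auxJac3 {L : Type*} [LieRing L] (x y z : L) :
    ⁅⁅x,y⁆,z⁆ + ⁅⁅y,z⁆,x⁆ + ⁅⁅z,x⁆,y⁆ = 0 := by
  rw [← lie_skew ⁅x,y⁆ z, ← lie_skew ⁅y,z⁆ x, ← lie_skew ⁅z,x⁆ y]
  linear_combination (norm := abel) -(lie_jacobi (x := x) (y := y) (z := z))

/-- Cyclic form of the cocycle identity, derived from the given form together with
skew-symmetry of `μ` (needs characteristic zero to divide by 3). -/
lemma auxKeyMu {K L V : Type*} [Field K] [CharZero K] [LieRing L] [LieAlgebra K L]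
    (μ : V → L → L → L)
    (hskew : ∀ (α : V) (l₁ l₂ : L), μ α l₁ l₂ = -μ α l₂ l₁)
    (hcoc : ∀ (α : V) (l₁ l₂ l₃ : L),
      -μ α ⁅l₁, l₂⁆ l₃ + μ α ⁅l₁, l₃⁆ l₂ - μ α ⁅l₂, l₃⁆ l₁
        + ⁅l₁, μ α l₂ l₃⁆ - ⁅l₂, μ α l₁ l₃⁆ + ⁅l₃, μ α l₁ l₂⁆ = 0)
    (α : V) (a b c : L) :
    μ α ⁅a,b⁆ c + μ α ⁅b,c⁆ a + μ α ⁅c,a⁆ b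
      + ⁅μ α a b, c⁆ + ⁅μ α b c, a⁆ + ⁅μ α c a, b⁆ = 0 := by
  have E1 := hcoc α a b c
  have E2 := hcoc α b c a
  have E3 := hcoc α c a b
  have E4 := hcoc α a c b
  have E5 := hcoc α c b a
  have E6 := hcoc α b a c
  rw [hskew α a c] at E1 E4 E6
  rw [hskew α b a] at E2 E5 E6
  rw [hskew α c b] at E3 E4 E5
  simp only [lie_neg, neg_neg, sub_neg_eq_add, sub_eq_add_neg] at E1 E2 E3 E4 E5 E6
  rw [← lie_skew (μ α a b) c, ← lie_skew (μ α b c) a, ← lie_skew (μ α c a) b]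
  have h3 : (3:ℤ) • (μ α ⁅a,b⁆ c + μ α ⁅b,c⁆ a + μ α ⁅c,a⁆ b
      + -⁅c, μ α a b⁆ + -⁅a, μ α b c⁆ + -⁅b, μ α c a⁆) = 0 := by
    linear_combination (norm := abel) (-2:ℤ) • E1 + (-2:ℤ) • E2 + (-2:ℤ) • E3
      + (-1:ℤ) • E4 + (-1:ℤ) • E5 + (-1:ℤ) • E6
  have h9 : (3:K) • (μ α ⁅a,b⁆ c + μ α ⁅b,c⁆ a + μ α ⁅c,a⁆ b
      + -⁅c, μ α a b⁆ + -⁅a, μ α b c⁆ + -⁅b, μ α c a⁆) = 0 := by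
    rw [show (3:K) = ((3:ℤ):K) by norm_num, Int.cast_smul_eq_zsmul]
    exact h3
  rcases smul_eq_zero.mp h9 with h | h
  · exact absurd h (by norm_num)
  · linear_combination (norm := abel) h

/-- The bracket of the universal infinitesimal deformation on `L ⊕ Hom(H²(L;L), L)`:
`[(l₁,φ₁),(l₂,φ₂)] = ([l₁,l₂], α ↦ μ(α)(l₁,l₂) + [φ₁(α), l₂] + [l₁, φ₂(α)])`. -/
def infBr {K L V : Type*} [Field K] [LieRing L] [LieAlgebra K L]
    (μ : V → L → L → L) : (L × (V → L)) → (L × (V → L)) → (L × (V → L)) :=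
  fun x y => (⁅x.1, y.1⁆, fun α => μ α x.1 y.1 + ⁅x.2 α, y.1⁆ + ⁅x.1, y.2 α⁆)

/-- if every `μ(α)` is a skew-symmetric 2-cocycle of the Chevalley–Eilenberg
complex of `L`, then the bracket above on `L ⊕ Hom(H²(L;L), L)` satisfies the Jacobi
identity (and is skew), i.e. defines a Lie algebra structure. -/
theorem stmt_8 (K L V : Type*) [Field K] [CharZero K] [LieRing L] [LieAlgebra K L]
    (μ : V → L → L → L)
    (halt : ∀ (α : V) (l : L), μ α l l = 0)
    (hskew : ∀ (α : V) (l₁ l₂ : L), μ α l₁ l₂ = -μ α l₂ l₁)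
    (hcoc : ∀ (α : V) (l₁ l₂ l₃ : L),
      -μ α ⁅l₁, l₂⁆ l₃ + μ α ⁅l₁, l₃⁆ l₂ - μ α ⁅l₂, l₃⁆ l₁
        + ⁅l₁, μ α l₂ l₃⁆ - ⁅l₂, μ α l₁ l₃⁆ + ⁅l₃, μ α l₁ l₂⁆ = 0) :
    (∀ x : L × (V → L), infBr (K := K) μ x x = 0) ∧
    (∀ x y z : L × (V → L),
      infBr (K := K) μ (infBr (K := K) μ x y) z
        + infBr (K := K) μ (infBr (K := K) μ y z) x
        + infBr (K := K) μ (infBr (K := K) μ z x) y = 0) := by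
  constructor
  · intro x
    refine Prod.ext (by simp [infBr]) ?_
    funext α
    simp only [infBr, halt, zero_add, Prod.snd_zero, Pi.zero_apply]
    rw [← lie_skew (x.2 α) x.1]
    abel
  · intro x y z
    refine Prod.ext ?_ ?_
    · simpa [infBr] using auxJac3 x.1 y.1 z.1
    · funext α
      simp only [infBr, Prod.fst_add, Prod.snd_add, Pi.add_apply, add_lie, Prod.snd_zero,
        Pi.zero_apply]
      linear_combination (norm := abel) auxKeyMu (K := K) μ hskew hcoc α x.1 y.1 z.1
        + auxJac3 (x.2 α) y.1 z.1 + auxJac3 (y.2 α) z.1 x.1 + auxJac3 (z.2 α) x.1 y.1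
end

section
/- For each t ∈ ℂ, the bracket [e_i, e_j]¹_t = (j−i)(e_{i+j} + t e_{i+j−1}) on the span of {e_i : i ≥ 1} satisfies the Jacobi identity, defining a one-parameter deformation of the Lie algebra L₁. -/
/-- The bilinear bracket `[e_i, e_j]¹_t = (j − i)(e_{i+j} + t e_{i+j−1})` on the span of
`{e_i : i ≥ 1}` (note `i + j − 1 ≥ 1` for `i, j ≥ 1`). -/
noncomputable def L1br1 (t : ℂ) : (ℕ+ →₀ ℂ) →ₗ[ℂ] (ℕ+ →₀ ℂ) →ₗ[ℂ] (ℕ+ →₀ ℂ) :=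
  Finsupp.lsum ℂ fun i => LinearMap.toSpanSingleton ℂ _
    (Finsupp.lsum ℂ fun j => LinearMap.toSpanSingleton ℂ _
      ((((j : ℕ) : ℂ) - ((i : ℕ) : ℂ)) •
        (Finsupp.single (i + j) (1 : ℂ) + t • Finsupp.single (i + j - 1) (1 : ℂ))))

lemma br_single (t : ℂ) (i j : ℕ+) : L1br1 t (Finsupp.single i 1) (Finsupp.single j 1) =
      (((j : ℕ) : ℂ) - ((i : ℕ) : ℂ)) •
        (Finsupp.single (i + j) (1 : ℂ) + t • Finsupp.single (i + j - 1) (1 : ℂ)) := by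
  simp [L1br1]

lemma pnat_sub_add (a k : ℕ+) (h : 1 < a) : a - 1 + k = a + k - 1 := by
  have h2 : (1:ℕ+) < a + k := by
    rw [← PNat.coe_lt_coe] at h ⊢
    rw [PNat.add_coe, PNat.one_coe] at *
    have := k.pos; omega
  apply PNat.coe_injective
  rw [PNat.add_coe, PNat.sub_coe, PNat.sub_coe, PNat.add_coe]
  simp only [h, h2, if_true, PNat.one_coe]
  rw [← PNat.coe_lt_coe, PNat.one_coe] at h
  omega

lemma pnat_cast_sub (a : ℕ+) (h : 1 < a) : (((a - 1 : ℕ+) : ℕ) : ℂ) = ((a:ℕ):ℂ) - 1 := by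
  have h1 : ((a - 1 : ℕ+) : ℕ) = (a:ℕ) - 1 := by
    rw [PNat.sub_coe, if_pos h, PNat.one_coe]
  simp only [h1]; rw [Nat.cast_sub a.pos, Nat.cast_one]

lemma L1br1_skew (t : ℂ) : L1br1 t + (L1br1 t).flip = 0 := by
  apply Finsupp.lhom_ext'; intro i; apply LinearMap.ext_ring
  apply Finsupp.lhom_ext'; intro j; apply LinearMap.ext_ring
  simp only [LinearMap.coe_comp, Function.comp_apply, Finsupp.lsingle_apply,
    LinearMap.add_apply, LinearMap.flip_apply, LinearMap.zero_apply,
    LinearMap.zero_comp, br_single]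
  rw [add_comm j i]
  module

noncomputable def L1T (t : ℂ) : (ℕ+ →₀ ℂ) →ₗ[ℂ] (ℕ+ →₀ ℂ) →ₗ[ℂ] (ℕ+ →₀ ℂ) →ₗ[ℂ] (ℕ+ →₀ ℂ) :=
  (L1br1 t).compr₂ (L1br1 t)

noncomputable def L1rot (S : (ℕ+ →₀ ℂ) →ₗ[ℂ] (ℕ+ →₀ ℂ) →ₗ[ℂ] (ℕ+ →₀ ℂ) →ₗ[ℂ] (ℕ+ →₀ ℂ)) :
    (ℕ+ →₀ ℂ) →ₗ[ℂ] (ℕ+ →₀ ℂ) →ₗ[ℂ] (ℕ+ →₀ ℂ) →ₗ[ℂ] (ℕ+ →₀ ℂ) :=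
  (LinearMap.lflip.toLinearMap ∘ₗ S).flip

lemma L1T_apply (t : ℂ) (x y z : ℕ+ →₀ ℂ) : L1T t x y z = L1br1 t (L1br1 t x y) z := rfl
lemma L1rot_apply (S : (ℕ+ →₀ ℂ) →ₗ[ℂ] (ℕ+ →₀ ℂ) →ₗ[ℂ] (ℕ+ →₀ ℂ) →ₗ[ℂ] (ℕ+ →₀ ℂ))
    (x y z : ℕ+ →₀ ℂ) : L1rot S x y z = S y z x := rfl

lemma L1_jacobi (t : ℂ) : L1T t + L1rot (L1T t) + L1rot (L1rot (L1T t)) = 0 := by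
  apply Finsupp.lhom_ext'; intro i; apply LinearMap.ext_ring
  apply Finsupp.lhom_ext'; intro j; apply LinearMap.ext_ring
  apply Finsupp.lhom_ext'; intro k; apply LinearMap.ext_ring
  simp only [LinearMap.coe_comp, Function.comp_apply, Finsupp.lsingle_apply,
    LinearMap.add_apply, LinearMap.zero_apply, LinearMap.zero_comp,
    L1T_apply, L1rot_apply, br_single, map_add, map_smul, LinearMap.add_apply,
    LinearMap.smul_apply]
  have hij : (1:ℕ+) < i + j := by
    rw [← PNat.coe_lt_coe, PNat.add_coe, PNat.one_coe]; have := i.pos; have := j.pos; omega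
  have hjk : (1:ℕ+) < j + k := by
    rw [← PNat.coe_lt_coe, PNat.add_coe, PNat.one_coe]; have := j.pos; have := k.pos; omega
  have hki : (1:ℕ+) < k + i := by
    rw [← PNat.coe_lt_coe, PNat.add_coe, PNat.one_coe]; have := k.pos; have := i.pos; omega
  rw [pnat_sub_add (i+j) k hij, pnat_sub_add (j+k) i hjk, pnat_sub_add (k+i) j hki]
  have e1 : j + k + i = i + j + k := by rw [add_comm (j+k) i, add_assoc]
  have e2 : k + i + j = i + j + k := by rw [add_comm k i, add_assoc, add_comm k j, ← add_assoc]
  rw [e1, e2]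
  simp only [pnat_cast_sub (i+j) hij, pnat_cast_sub (j+k) hjk, pnat_cast_sub (k+i) hki,
    PNat.add_coe, Nat.cast_add]
  module

/-- for every `t ∈ ℂ`, the bracket `[e_i, e_j]¹_t = (j−i)(e_{i+j} + t e_{i+j−1})`
is skew-symmetric and satisfies the Jacobi identity, defining a one-parameter deformation of
the Lie algebra `L₁`. -/
theorem stmt_11 (t : ℂ) :
    (∀ i j : ℕ+, L1br1 t (Finsupp.single i 1) (Finsupp.single j 1) =
      (((j : ℕ) : ℂ) - ((i : ℕ) : ℂ)) •
        (Finsupp.single (i + j) (1 : ℂ) + t • Finsupp.single (i + j - 1) (1 : ℂ))) ∧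
    (∀ x y : ℕ+ →₀ ℂ, L1br1 t x y = -L1br1 t y x) ∧
    (∀ x y z : ℕ+ →₀ ℂ,
      L1br1 t (L1br1 t x y) z + L1br1 t (L1br1 t y z) x + L1br1 t (L1br1 t z x) y = 0) := by
  refine ⟨br_single t, fun x y => ?_, fun x y z => ?_⟩
  · have h := LinearMap.congr_fun (LinearMap.congr_fun (L1br1_skew t) x) y
    simp only [LinearMap.add_apply, LinearMap.flip_apply, LinearMap.zero_apply] at h
    exact eq_neg_of_add_eq_zero_left h
  · have h := LinearMap.congr_fun (LinearMap.congr_fun (LinearMap.congr_fun (L1_jacobi t) x) y) z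
    simpa only [LinearMap.add_apply, LinearMap.zero_apply, L1T_apply, L1rot_apply] using h
end

section
/- For k ≥ 2, define the 1-cochain μ_k : L₁ → W by μ_k(e_i) = (−1)^{i+1} · C(k−1, i−2) · e_{i−k}, where C(·,·) is the binomial coefficient (zero when i−2 < 0 or i−2 > k−1). For k ∈ {2, 3, 4}, the Chevalley–Eilenberg coboundary δμ_k, given by (δμ_k)(e_i, e_j) = e_i·μ_k(e_j) − e_j·μ_k(e_i) − μ_k([e_i,e_j]), takes values in the subspace of W spanned by {e_m : m ≥ 1} (i.e., in L₁) for all i, j ≥ 1. -/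
/-- The bilinear action of `L₁` on `W` (basis `e_j`, `j ∈ ℤ`): `e_i · e_j = (j − i) e_{i+j}`. -/
noncomputable def Wact : (ℕ+ →₀ ℂ) →ₗ[ℂ] (ℤ →₀ ℂ) →ₗ[ℂ] (ℤ →₀ ℂ) :=
  Finsupp.lsum ℂ fun i => LinearMap.toSpanSingleton ℂ _
    (Finsupp.lsum ℂ fun j => LinearMap.toSpanSingleton ℂ _
      (((j : ℂ) - ((i : ℕ) : ℂ)) • Finsupp.single ((i : ℤ) + j) (1 : ℂ)))

/-- The cochain `μ_k : L₁ → W` on basis vectors: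
`μ_k(e_i) = (−1)^{i+1} C(k−1, i−2) e_{i−k}` (zero when `i < 2` or `i − 2 > k − 1`). -/
noncomputable def muk (k : ℕ) (i : ℕ+) : ℤ →₀ ℂ :=
  if (i : ℕ) < 2 then 0
  else ((-1 : ℂ)) ^ ((i : ℕ) + 1) •
    ((Nat.choose (k - 1) ((i : ℕ) - 2) : ℂ)) • Finsupp.single ((i : ℤ) - (k : ℤ)) (1 : ℂ)

/-- Scalar coefficient of `μ_k` at `e_n`. -/
noncomputable def mucoef (k n : ℕ) : ℂ :=
  if n < 2 then 0 else (-1 : ℂ) ^ (n + 1) * (Nat.choose (k - 1) (n - 2) : ℂ)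

lemma muk_eq (k : ℕ) (i : ℕ+) :
    muk k i = mucoef k (i : ℕ) • Finsupp.single ((i : ℤ) - (k : ℤ)) (1 : ℂ) := by
  unfold muk mucoef
  split_ifs with h
  · simp
  · rw [smul_smul]

lemma wact_single (i : ℕ+) (a : ℤ) (c : ℂ) :
    Wact (Finsupp.single i 1) (c • Finsupp.single a (1 : ℂ))
      = (c * ((a : ℂ) - ((i : ℕ) : ℂ))) • Finsupp.single ((i : ℤ) + a) (1 : ℂ) := by
  rw [map_smul, Wact, Finsupp.lsum_single, LinearMap.toSpanSingleton_apply, one_smul,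
    Finsupp.lsum_single, LinearMap.toSpanSingleton_apply, one_smul, smul_smul, mul_comm]

/-- for `k ∈ {2, 3, 4}`, the Chevalley–Eilenberg coboundary
`(δμ_k)(e_i, e_j) = e_i·μ_k(e_j) − e_j·μ_k(e_i) − μ_k([e_i,e_j])`
(with `[e_i,e_j] = (j−i) e_{i+j}`) takes values in the subspace of `W` spanned by
`{e_m : m ≥ 1}`, i.e. in `L₁`: its coefficient at every `e_m` with `m < 1` vanishes. -/
theorem stmt_17 :
    ∀ k ∈ ({2, 3, 4} : Set ℕ), ∀ i j : ℕ+, ∀ m : ℤ, m < 1 →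
      (Wact (Finsupp.single i 1) (muk k j) - Wact (Finsupp.single j 1) (muk k i)
        - ((((j : ℕ) : ℂ) - ((i : ℕ) : ℂ)) • muk k (i + j))) m = 0 := by
  intro k hk i j m hm
  simp only [Set.mem_insert_iff, Set.mem_singleton_iff] at hk
  rw [muk_eq, muk_eq, muk_eq, wact_single, wact_single]
  have hij : ((i + j : ℕ+) : ℤ) = ((i : ℕ) : ℤ) + ((j : ℕ) : ℤ) := by
    push_cast; ring
  have hijn : ((i + j : ℕ+) : ℕ) = (i : ℕ) + (j : ℕ) := PNat.add_coe i j
  simp only [Finsupp.sub_apply, Finsupp.smul_apply, Finsupp.single_apply, smul_eq_mul,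
    hij, hijn]
  rcases eq_or_ne (((i : ℕ) : ℤ) + (((j : ℕ) : ℤ) - (k : ℤ))) m with h1 | h1
  · rw [if_pos h1,
      if_pos (show ((j : ℕ) : ℤ) + (((i : ℕ) : ℤ) - (k : ℤ)) = m by omega),
      if_pos (show (((i : ℕ) + (j : ℕ) : ℕ) : ℤ) - (k : ℤ) = m by push_cast; omega)]
    have hi1 : 1 ≤ (i : ℕ) := i.2
    have hj1 : 1 ≤ (j : ℕ) := j.2
    have hb : (i : ℕ) + (j : ℕ) ≤ k := by omega
    have hk4 : k ≤ 4 := by rcases hk with h | h | h <;> omega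
    set a := (i : ℕ) with hA
    set b := (j : ℕ) with hB
    clear_value a b
    have ha3 : a ≤ 3 := by omega
    have hb3 : b ≤ 3 := by omega
    clear h1 hm hij hijn
    rcases hk with rfl | rfl | rfl <;>
      interval_cases a <;> interval_cases b <;>
        norm_num [mucoef, Nat.choose] <;> omega
  · rw [if_neg h1,
      if_neg (show ¬(((j : ℕ) : ℤ) + (((i : ℕ) : ℤ) - (k : ℤ)) = m) by omega),
      if_neg (show ¬((((i : ℕ) + (j : ℕ) : ℕ) : ℤ) - (k : ℤ) = m) by push_cast; omega)]
    ring
end
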